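/- Let W(Ã_2) be the affine Coxeter group with generators s_1, s_2, s_3 and let k ≥ 1 be an integer. Every fully commutative element of W(Ã_2) of Coxeter length 3k equals ψ_3^d((s_2s_1s_3)^k) or ψ_3^d((s_1s_2s_3)^k) for some d ∈ {0,1,2}; every fully commutative element of length 3k+1 equals ψ_3^d((s_2s_1s_3)^k s_2) or ψ_3^d((s_1s_2s_3)^k s_1) for some d ∈ {0,1,2}; and every fully commutative element of length 3k+2 equals ψ_3^d((s_2s_1s_3)^k s_2s_1) or ψ_3^d((s_1s_2s_3)^k s_1s_2) for some d ∈ {0,1,2}. -/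

import Mathlib

namespace AffineTL

/-- The Coxeter matrix of type `Ã₂`: three generators, all bonds of order `3`. -/
def A2tilde : CoxeterMatrix (Fin 3) where
  M := fun i j => if i = j then 1 else 3
  isSymm := Matrix.IsSymm.ext (by decide)
  diagonal := by decide
  off_diagonal := by decide

/-- `w` is fully commutative: no reduced word for `w` contains a factor `s t s`
with `s ≠ t` generators. -/
def FullyCommutative3 {W : Type*} [Group W] (cs : CoxeterSystem A2tilde W) (w : W) : Prop :=
  ∀ ω : List (Fin 3), cs.IsReduced ω → cs.wordProd ω = w →
    ∀ l₁ l₂ : List (Fin 3), ∀ i j : Fin 3, i ≠ j → ω ≠ l₁ ++ [i, j, i] ++ l₂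

/-! ### Auxiliary material -/

open Fin.CommRing

/-- The periodic pattern function: `a, b, -(a+b), a, b, -(a+b), ...`. -/
def patF (a b : Fin 3) (t : ℕ) : Fin 3 := ![a, b, -(a+b)] (t : Fin 3)

lemma patF_zero (a b : Fin 3) : patF a b 0 = a := rfl
lemma patF_one (a b : Fin 3) : patF a b 1 = b := rfl

lemma patF_step (a b : Fin 3) (t : ℕ) : patF a b (t+2) = -(patF a b t + patF a b (t+1)) := by
  have h : ∀ a b i : Fin 3, ![a,b,-(a+b)] (i+2) = -(![a,b,-(a+b)] i + ![a,b,-(a+b)] (i+1)) := by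
    decide
  have h2 : ((t+2 : ℕ) : Fin 3) = (t : Fin 3) + 2 := by push_cast; ring
  have h1 : ((t+1 : ℕ) : Fin 3) = (t : Fin 3) + 1 := by push_cast; ring
  simp only [patF, h2, h1, h]

lemma patF_3k (a b : Fin 3) (q : ℕ) :
    patF a b (3*q) = a ∧ patF a b (3*q+1) = b ∧ patF a b (3*q+2) = -(a+b) := by
  have h0 : ((3*q : ℕ) : Fin 3) = 0 := by push_cast; ring
  have h1 : ((3*q+1 : ℕ) : Fin 3) = 1 := by push_cast; ring
  have h2 : ((3*q+2 : ℕ) : Fin 3) = 2 := by push_cast; ring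
  refine ⟨?_, ?_, ?_⟩ <;> simp [patF, h0, h1, h2]

/-- The pattern word of length `n` starting with `a, b`. -/
def patW (a b : Fin 3) (n : ℕ) : List (Fin 3) := (List.range n).map (patF a b)

variable {W : Type*} [Group W] (cs : CoxeterSystem A2tilde W)

lemma range_add_three (n : ℕ) :
    List.range (n+3) = List.range n ++ [n, n+1, n+2] := by
  rw [List.range_succ, List.range_succ, List.range_succ]
  simp

lemma wordProd_patW (a b : Fin 3) (k : ℕ) :
    cs.wordProd (patW a b (3*k)) = (cs.simple a * cs.simple b * cs.simple (-(a+b)))^k ∧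
    cs.wordProd (patW a b (3*k+1))
      = (cs.simple a * cs.simple b * cs.simple (-(a+b)))^k * cs.simple a ∧
    cs.wordProd (patW a b (3*k+2))
      = (cs.simple a * cs.simple b * cs.simple (-(a+b)))^k * cs.simple a * cs.simple b := by
  induction k with
  | zero =>
    refine ⟨?_, ?_, ?_⟩ <;>
      simp [patW, List.range_succ, CoxeterSystem.wordProd, patF]
  | succ k ih =>
    obtain ⟨ih0, ih1, ih2⟩ := ih
    have e0 : 3*(k+1) = (3*k) + 3 := by ring
    have e1 : 3*(k+1)+1 = (3*k+1) + 3 := by ring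
    have e2 : 3*(k+1)+2 = (3*k+2) + 3 := by ring
    have key : ∀ m : ℕ, cs.wordProd (patW a b (m+3))
        = cs.wordProd (patW a b m)
          * (cs.simple (patF a b m) * cs.simple (patF a b (m+1))
              * cs.simple (patF a b (m+2))) := by
      intro m
      rw [patW, range_add_three, List.map_append, cs.wordProd_append]
      simp [CoxeterSystem.wordProd_cons, mul_assoc, patW]
    obtain ⟨p0, p1, p2⟩ := patF_3k a b k
    have q0 := (patF_3k a b (k+1)).1
    refine ⟨?_, ?_, ?_⟩
    · rw [e0, key, ih0, p0, p1, p2, pow_succ]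
    · rw [e1, key, ih1]
      have f1 : patF a b (3*k+1+1) = -(a+b) := by rw [show 3*k+1+1 = 3*k+2 by ring, p2]
      have f2 : patF a b (3*k+1+2) = a := by rw [show 3*k+1+2 = 3*(k+1) by ring, q0]
      rw [p1, f1, f2, pow_succ]
      group
    · rw [e2, key, ih2]
      have f1 : patF a b (3*k+2+1) = a := by rw [show 3*k+2+1 = 3*(k+1) by ring, q0]
      have f2 : patF a b (3*k+2+2) = b := by
        rw [show 3*k+2+2 = 3*(k+1)+1 by ring, (patF_3k a b (k+1)).2.1]
      rw [p2, f1, f2, pow_succ]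
      group

lemma split2 (ω : List (Fin 3)) (t : ℕ) (h : t + 1 < ω.length) :
    ω = ω.take t ++ [ω[t], ω[t+1]] ++ ω.drop (t+2) := by
  have h0 : t < ω.length := by omega
  conv_lhs => rw [← List.take_append_drop t ω]
  rw [List.drop_eq_getElem_cons h0, List.drop_eq_getElem_cons h]
  simp

lemma split3 (ω : List (Fin 3)) (t : ℕ) (h : t + 2 < ω.length) :
    ω = ω.take t ++ [ω[t], ω[t+1], ω[t+2]] ++ ω.drop (t+3) := by
  have h0 : t < ω.length := by omega
  have h1 : t + 1 < ω.length := by omega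
  conv_lhs => rw [← List.take_append_drop t ω]
  rw [List.drop_eq_getElem_cons h0, List.drop_eq_getElem_cons h1, List.drop_eq_getElem_cons h]
  simp

lemma adj_ne (ω : List (Fin 3)) (hred : cs.IsReduced ω) (t : ℕ) (h : t + 1 < ω.length) :
    ω[t] ≠ ω[t+1] := by
  intro heq
  have hsplit := split2 ω t h
  have hprod : cs.wordProd ω = cs.wordProd (ω.take t ++ ω.drop (t+2)) := by
    conv_lhs => rw [hsplit]
    rw [cs.wordProd_append, cs.wordProd_append, cs.wordProd_append]
    have : cs.wordProd [ω[t], ω[t+1]] = 1 := by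
      rw [heq]
      simp [CoxeterSystem.wordProd_cons, cs.simple_mul_simple_self]
    rw [this]
    group
  have hle := cs.length_wordProd_le (ω.take t ++ ω.drop (t+2))
  rw [← hprod, hred] at hle
  simp only [List.length_append, List.length_take, List.length_drop] at hle
  omega

lemma third_eq (ω : List (Fin 3)) (hred : cs.IsReduced ω) (w : W)
    (hw : FullyCommutative3 cs w) (hprod : cs.wordProd ω = w)
    (t : ℕ) (h : t + 2 < ω.length) :
    ω[t+2] = -(ω[t] + ω[t+1]) := by
  have h1 : ω[t] ≠ ω[t+1] := adj_ne cs ω hred t (by omega)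
  have h2 : ω[t+1] ≠ ω[t+2] := adj_ne cs ω hred (t+1) (by omega)
  have h3 : ω[t+2] ≠ ω[t] := by
    intro heq
    have hsplit := split3 ω t h
    rw [heq] at hsplit
    exact hw ω hred hprod (ω.take t) (ω.drop (t+3)) ω[t] ω[t+1] h1 hsplit
  revert h1 h2 h3
  generalize ω[t] = p; generalize ω[t+1] = q; generalize ω[t+2] = r
  revert p q r; decide

/-- A fully commutative element's reduced word is the pattern word. -/
lemma classify (w : W) (hw : FullyCommutative3 cs w) (n : ℕ) (hn : cs.length w = n)
    (h2 : 2 ≤ n) : ∃ a b : Fin 3, a ≠ b ∧ w = cs.wordProd (patW a b n) := by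
  obtain ⟨ω, hred, rfl⟩ := cs.exists_reduced_word' w
  have hlen : ω.length = n := by rw [← hred, hn]
  have h0 : 0 < ω.length := by omega
  have h1 : 1 < ω.length := by omega
  refine ⟨ω[0], ω[1], adj_ne cs ω hred 0 h1, ?_⟩
  congr 1
  have key : ∀ t (ht : t < ω.length), ω[t] = patF ω[0] ω[1] t := by
    intro t
    induction t using Nat.strong_induction_on with
    | _ t ih =>
      match t with
      | 0 => intro _; rw [patF_zero]
      | 1 => intro _; rw [patF_one]
      | (m+2) =>
        intro ht
        rw [third_eq cs ω hred _ hw rfl m ht, patF_step,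
          ih m (by omega) (by omega), ih (m+1) (by omega) (by omega)]
  apply List.ext_getElem
  · simp [patW, hlen]
  · intro i hi hi'
    rw [key i hi]
    simp [patW]

/-- Iterates of `ψ` on products of simple reflections. -/
lemma iter_psi (ψ : W ≃* W) (hψ : ∀ i : Fin 3, ψ (cs.simple i) = cs.simple (i + 1)) :
    ∀ d : ℕ, ∀ i : Fin 3, (⇑ψ)^[d] (cs.simple i) = cs.simple (i + d) := by
  intro d
  induction d with
  | zero => intro i; simp
  | succ d ih =>
    intro i
    rw [Function.iterate_succ', Function.comp_apply, ih, hψ]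
    congr 1
    push_cast
    ring

lemma iter_mul (ψ : W ≃* W) (d : ℕ) (x y : W) :
    (⇑ψ)^[d] (x * y) = (⇑ψ)^[d] x * (⇑ψ)^[d] y := by
  induction d generalizing x y with
  | zero => rfl
  | succ d ih => rw [Function.iterate_succ', Function.comp_apply, ih, map_mul]; rfl

lemma iter_pow (ψ : W ≃* W) (d : ℕ) (x : W) (k : ℕ) :
    (⇑ψ)^[d] (x ^ k) = ((⇑ψ)^[d] x) ^ k := by
  induction d with
  | zero => rfl
  | succ d ih => rw [Function.iterate_succ', Function.comp_apply, ih, map_pow]; rfl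

lemma psi_form0 (ψ : W ≃* W) (hψ : ∀ i : Fin 3, ψ (cs.simple i) = cs.simple (i + 1)) (d : ℕ) (x y z : Fin 3) (k : ℕ) :
    (⇑ψ)^[d] ((cs.simple x * cs.simple y * cs.simple z)^k)
      = (cs.simple (x+d) * cs.simple (y+d) * cs.simple (z+d))^k := by
  simp [iter_pow, iter_mul, iter_psi cs ψ hψ]

lemma psi_form1 (ψ : W ≃* W) (hψ : ∀ i : Fin 3, ψ (cs.simple i) = cs.simple (i + 1)) (d : ℕ) (x y z : Fin 3) (k : ℕ) :
    (⇑ψ)^[d] ((cs.simple x * cs.simple y * cs.simple z)^k * cs.simple x)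
      = (cs.simple (x+d) * cs.simple (y+d) * cs.simple (z+d))^k * cs.simple (x+d) := by
  simp [iter_pow, iter_mul, iter_psi cs ψ hψ]

lemma psi_form2 (ψ : W ≃* W) (hψ : ∀ i : Fin 3, ψ (cs.simple i) = cs.simple (i + 1)) (d : ℕ) (x y z : Fin 3) (k : ℕ) :
    (⇑ψ)^[d] ((cs.simple x * cs.simple y * cs.simple z)^k * cs.simple x * cs.simple y)
      = (cs.simple (x+d) * cs.simple (y+d) * cs.simple (z+d))^k
        * cs.simple (x+d) * cs.simple (y+d) := by
  simp [iter_pow, iter_mul, iter_psi cs ψ hψ]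

end AffineTL

open AffineTL in
/-- classification of the fully commutative elements of `W(Ã₂)` of length
`3k`, `3k+1`, `3k+2` (`k ≥ 1`) up to powers of the Dynkin automorphism `ψ₃`
(`s₁ ↦ s₂ ↦ s₃ ↦ s₁`, indices `0 ↦ 1 ↦ 2 ↦ 0`). -/
theorem statement6 {W : Type*} [Group W] (cs : CoxeterSystem A2tilde W)
    (ψ : W ≃* W) (hψ : ∀ i : Fin 3, ψ (cs.simple i) = cs.simple (i + 1))
    (w : W) (hw : FullyCommutative3 cs w) (k : ℕ) (hk : 1 ≤ k) :
    (cs.length w = 3 * k →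
      ∃ d : Fin 3,
        w = (⇑ψ)^[d.val] ((cs.simple 1 * cs.simple 0 * cs.simple 2) ^ k) ∨
        w = (⇑ψ)^[d.val] ((cs.simple 0 * cs.simple 1 * cs.simple 2) ^ k)) ∧
    (cs.length w = 3 * k + 1 →
      ∃ d : Fin 3,
        w = (⇑ψ)^[d.val] ((cs.simple 1 * cs.simple 0 * cs.simple 2) ^ k * cs.simple 1) ∨
        w = (⇑ψ)^[d.val] ((cs.simple 0 * cs.simple 1 * cs.simple 2) ^ k * cs.simple 0)) ∧
    (cs.length w = 3 * k + 2 →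
      ∃ d : Fin 3,
        w = (⇑ψ)^[d.val]
          ((cs.simple 1 * cs.simple 0 * cs.simple 2) ^ k * cs.simple 1 * cs.simple 0) ∨
        w = (⇑ψ)^[d.val]
          ((cs.simple 0 * cs.simple 1 * cs.simple 2) ^ k * cs.simple 0 * cs.simple 1)) := by
  have F0 := psi_form0 cs ψ hψ
  have F1 := psi_form1 cs ψ hψ
  have F2 := psi_form2 cs ψ hψ
  have n1 : (-1 : Fin 3) = 2 := by decide
  have n2 : (-2 : Fin 3) = 1 := by decide
  refine ⟨?_, ?_, ?_⟩ <;> intro hlen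
  · obtain ⟨a, b, hab, hw'⟩ := classify cs w hw (3*k) hlen (by omega)
    rw [(wordProd_patW cs a b k).1] at hw'
    fin_cases a <;> fin_cases b <;> simp only [Fin.mk_zero, Fin.mk_one, Fin.isValue] at hw' hab <;>
      [(exact absurd rfl hab);
       (exact ⟨0, Or.inr (by rw [hw', F0]; simp [n1, n2])⟩);
       (exact ⟨2, Or.inl (by rw [hw', F0]; simp [n1, n2])⟩);
       (exact ⟨0, Or.inl (by rw [hw', F0]; simp [n1, n2])⟩);
       (exact absurd rfl hab);
       (exact ⟨1, Or.inr (by rw [hw', F0]; simp [n1, n2])⟩);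
       (exact ⟨2, Or.inr (by rw [hw', F0]; simp [n1, n2])⟩);
       (exact ⟨1, Or.inl (by rw [hw', F0]; simp [n1, n2])⟩);
       (exact absurd rfl hab)]
  · obtain ⟨a, b, hab, hw'⟩ := classify cs w hw (3*k+1) hlen (by omega)
    rw [(wordProd_patW cs a b k).2.1] at hw'
    fin_cases a <;> fin_cases b <;> simp only [Fin.mk_zero, Fin.mk_one, Fin.isValue] at hw' hab <;>
      [(exact absurd rfl hab);
       (exact ⟨0, Or.inr (by rw [hw', F1]; simp [n1, n2])⟩);
       (exact ⟨2, Or.inl (by rw [hw', F1]; simp [n1, n2])⟩);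
       (exact ⟨0, Or.inl (by rw [hw', F1]; simp [n1, n2])⟩);
       (exact absurd rfl hab);
       (exact ⟨1, Or.inr (by rw [hw', F1]; simp [n1, n2])⟩);
       (exact ⟨2, Or.inr (by rw [hw', F1]; simp [n1, n2])⟩);
       (exact ⟨1, Or.inl (by rw [hw', F1]; simp [n1, n2])⟩);
       (exact absurd rfl hab)]
  · obtain ⟨a, b, hab, hw'⟩ := classify cs w hw (3*k+2) hlen (by omega)
    rw [(wordProd_patW cs a b k).2.2] at hw'
    fin_cases a <;> fin_cases b <;> simp only [Fin.mk_zero, Fin.mk_one, Fin.isValue] at hw' hab <;>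
      [(exact absurd rfl hab);
       (exact ⟨0, Or.inr (by rw [hw', F2]; simp [n1, n2])⟩);
       (exact ⟨2, Or.inl (by rw [hw', F2]; simp [n1, n2])⟩);
       (exact ⟨0, Or.inl (by rw [hw', F2]; simp [n1, n2])⟩);
       (exact absurd rfl hab);
       (exact ⟨1, Or.inr (by rw [hw', F2]; simp [n1, n2])⟩);
       (exact ⟨2, Or.inr (by rw [hw', F2]; simp [n1, n2])⟩);
       (exact ⟨1, Or.inl (by rw [hw', F2]; simp [n1, n2])⟩);
       (exact absurd rfl hab)]
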